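/- Let h : ℕ → ℕ be monotone inflationary, a, b, c ≥ 1 and x₀ ≥ 0 natural numbers, and H(x) = x+1. If h(x) ≤ H^{ω^b·c}(x) for all x ≥ x₀, then h^{ω^a}(x) ≤ H^{ω^{b+a}}((c+1)·x) for all x ≥ max{2c, x₀}. -/

import Mathlib

open Ordinal

/-- The graph of the Hardy hierarchy `h^α` for ordinals `α ≤ ω^ω`, defined with
the standard fundamental sequences `(ω^ω)(x) = ω^(x+1)` and
`(β + ω^(k+1))(x) = β + ω^k·(x+1)` (for `β + ω^(k+1)` in Cantor Normal Form,
i.e. `ω^(k+1) ∣ β`).  `HardyRel h α x y` means `h^α(x) = y`. -/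
inductive HardyRel (h : ℕ → ℕ) : Ordinal → ℕ → ℕ → Prop
  | zero (x : ℕ) : HardyRel h 0 x x
  | succ (α : Ordinal) (x y : ℕ) : HardyRel h α (h x) y → HardyRel h (α + 1) x y
  | top (x y : ℕ) : HardyRel h (omega0 ^ (x + 1 : ℕ)) x y →
      HardyRel h (omega0 ^ omega0) x y
  | limit (β : Ordinal) (k x y : ℕ) : omega0 ^ (k + 1) ∣ β →
      HardyRel h (β + omega0 ^ k * ((x + 1 : ℕ) : Ordinal)) x y →
      HardyRel h (β + omega0 ^ (k + 1)) x y

/-! ### Auxiliary ordinal lemmas -/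

lemma myPowNeZero (k : ℕ) : (omega0 ^ k : Ordinal) ≠ 0 :=
  pow_ne_zero k omega0_ne_zero

lemma myPowPos (k : ℕ) : (0 : Ordinal) < omega0 ^ k :=
  pos_iff_ne_zero.2 (myPowNeZero k)

lemma myIsLimitPowSucc (k : ℕ) : Order.IsSuccLimit (omega0 ^ (k + 1) : Ordinal) := by
  rw [pow_succ]
  exact isSuccLimit_mul_right (myPowPos k) isSuccLimit_omega0

lemma myAddOneNeZero (α : Ordinal) : α + 1 ≠ 0 := by
  rw [Ordinal.add_one_eq_succ]; exact Ordinal.succ_ne_zero α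

lemma mySuccNeLimit {o : Ordinal} (ho : Order.IsSuccLimit o) (α : Ordinal) : α + 1 ≠ o := by
  intro e
  have h1 : α < o := by rw [← e, Ordinal.add_one_eq_succ]; exact Order.lt_succ α
  have h2 := ho.succ_lt h1
  rw [← Ordinal.add_one_eq_succ, e] at h2
  exact lt_irrefl _ h2

lemma myAddOneInj {α β : Ordinal} (e : α + 1 = β + 1) : α = β := by
  rw [Ordinal.add_one_eq_succ, Ordinal.add_one_eq_succ] at e
  exact Order.succ_injective e

lemma myTopNe (k : ℕ) (β : Ordinal) : β + omega0 ^ (k + 1) ≠ omega0 ^ omega0 := by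
  intro e
  have hpow_lt : (omega0 ^ (k + 1) : Ordinal) < omega0 ^ omega0 := by
    rw [← opow_natCast]
    exact (opow_lt_opow_iff_right one_lt_omega0).2 (nat_lt_omega0 (k + 1))
  have hβle : β ≤ omega0 ^ omega0 := by rw [← e]; exact le_self_add
  have hβlt : β < omega0 ^ omega0 := by
    rcases hβle.lt_or_eq with hlt | heq
    · exact hlt
    · exfalso
      rw [heq] at e
      have e0 : omega0 ^ omega0 + omega0 ^ (k + 1) = omega0 ^ omega0 + 0 := by
        rw [add_zero]; exact e
      exact myPowNeZero (k + 1) ((add_right_inj _).1 e0)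
  exact ne_of_lt (principal_add_omega0_opow omega0 hβlt hpow_lt) e

lemma myLimitUniqAux {k j : ℕ} (hlt : k < j) {γ δ : Ordinal}
    (e : omega0 ^ (k + 1) * (γ + 1) = omega0 ^ (j + 1) * (δ + 1)) : False := by
  have hsplit : (omega0 ^ (j + 1) : Ordinal) = omega0 ^ (k + 1) * omega0 ^ (j - k) := by
    rw [← pow_add]; congr 1; omega
  rw [hsplit, mul_assoc] at e
  have e2 : (γ + 1 : Ordinal) = omega0 ^ (j - k) * (δ + 1) :=
    (mul_left_cancel_iff_of_pos (myPowPos (k + 1))).1 e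
  have hL : Order.IsSuccLimit ((omega0 : Ordinal) ^ (j - k) * (δ + 1)) := by
    rw [mul_add_one]
    have hjk : j - k = (j - k - 1) + 1 := by omega
    exact isSuccLimit_add _ (hjk ▸ myIsLimitPowSucc (j - k - 1))
  exact mySuccNeLimit hL γ e2

lemma myLimitUniq {k j : ℕ} {β β' : Ordinal} (hk : omega0 ^ (k + 1) ∣ β)
    (hj : omega0 ^ (j + 1) ∣ β')
    (e : β + omega0 ^ (k + 1) = β' + omega0 ^ (j + 1)) : k = j ∧ β = β' := by
  obtain ⟨γ, rfl⟩ := hk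
  obtain ⟨δ, rfl⟩ := hj
  rw [← mul_add_one, ← mul_add_one] at e
  have hkj : k = j := by
    by_contra hne
    rcases Nat.lt_or_ge k j with hlt | hge
    · exact myLimitUniqAux hlt e
    · exact myLimitUniqAux (lt_of_le_of_ne hge (Ne.symm hne)) e.symm
  subst hkj
  have e2 : (γ + 1 : Ordinal) = δ + 1 := (mul_left_cancel_iff_of_pos (myPowPos (k + 1))).1 e
  exact ⟨rfl, by rw [myAddOneInj e2]⟩

/-! ### Determinism of the Hardy relation -/

theorem hardy_det {h : ℕ → ℕ} {α : Ordinal} {x y : ℕ} (H : HardyRel h α x y) :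
    ∀ {α' : Ordinal} {y' : ℕ}, α' = α → HardyRel h α' x y' → y = y' := by
  induction H with
  | zero x =>
    intro α' y' hα H'
    cases H' with
    | zero => rfl
    | succ α x y _ => exact absurd hα (myAddOneNeZero α)
    | top x y _ =>
      exact absurd hα (isSuccLimit_opow one_lt_omega0 isSuccLimit_omega0).ne_zero
    | limit β k x y _ _ => exact absurd hα (isSuccLimit_add β (myIsLimitPowSucc k)).ne_zero
  | succ α x y _ ih =>
    intro α' y' hα H'
    cases H' with
    | zero => exact absurd hα.symm (myAddOneNeZero α)
    | succ α₂ x y h' => exact ih (myAddOneInj hα) h'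
    | top x y _ =>
      exact absurd hα.symm (mySuccNeLimit (isSuccLimit_opow one_lt_omega0 isSuccLimit_omega0) α)
    | limit β k x y _ _ =>
      exact absurd hα.symm (mySuccNeLimit (isSuccLimit_add β (myIsLimitPowSucc k)) α)
  | top x y _ ih =>
    intro α' y' hα H'
    cases H' with
    | zero => exact absurd hα.symm (isSuccLimit_opow one_lt_omega0 isSuccLimit_omega0).ne_zero
    | succ α₂ x y _ =>
      exact absurd hα (mySuccNeLimit (isSuccLimit_opow one_lt_omega0 isSuccLimit_omega0) α₂)
    | top x y h' => exact ih rfl h'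
    | limit β k x y hd _ => exact absurd hα (myTopNe k β)
  | limit β k x y hd _ ih =>
    intro α' y' hα H'
    cases H' with
    | zero => exact absurd hα.symm (isSuccLimit_add β (myIsLimitPowSucc k)).ne_zero
    | succ α₂ x y _ =>
      exact absurd hα (mySuccNeLimit (isSuccLimit_add β (myIsLimitPowSucc k)) α₂)
    | top x y _ => exact absurd hα.symm (myTopNe k β)
    | limit β' k' x y hd' h' =>
      obtain ⟨hk, hβ⟩ := myLimitUniq hd' hd hα
      subst hk; subst hβ
      exact ih rfl h'

/-! ### The Hardy functions along `ω^k` -/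

def Hpow (h : ℕ → ℕ) : ℕ → ℕ → ℕ
  | 0 => h
  | k + 1 => fun x => (Hpow h k)^[x + 1] x

lemma hpow_succ (h : ℕ → ℕ) (k x : ℕ) : Hpow h (k + 1) x = (Hpow h k)^[x + 1] x := rfl

/-- Realization: `HardyRel h (β + ω^k·m) x y` holds when `h^β((Hpow h k)^[m] x) = y`. -/
lemma hardy_iter (h : ℕ → ℕ) :
    ∀ k m : ℕ, ∀ (β : Ordinal) (x y : ℕ), omega0 ^ k ∣ β →
      HardyRel h β ((Hpow h k)^[m] x) y →
      HardyRel h (β + omega0 ^ k * (m : Ordinal)) x y := by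
  have iter_of_single : ∀ k : ℕ,
      (∀ (β : Ordinal) (x y : ℕ), omega0 ^ k ∣ β →
        HardyRel h β (Hpow h k x) y → HardyRel h (β + omega0 ^ k) x y) →
      ∀ m : ℕ, ∀ (β : Ordinal) (x y : ℕ), omega0 ^ k ∣ β →
        HardyRel h β ((Hpow h k)^[m] x) y →
        HardyRel h (β + omega0 ^ k * (m : Ordinal)) x y := by
    intro k single m
    induction m with
    | zero => intro β x y _ H; simpa using H
    | succ m ih =>
      intro β x y hdvd H
      rw [Function.iterate_succ_apply] at H
      have h1 := single _ x y (dvd_add hdvd (dvd_mul_right _ _)) (ih β (Hpow h k x) y hdvd H)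
      have e : β + omega0 ^ k * (m : Ordinal) + omega0 ^ k
          = β + omega0 ^ k * ((m + 1 : ℕ) : Ordinal) := by
        rw [add_assoc, Nat.cast_add, Nat.cast_one, mul_add, mul_one]
      rwa [e] at h1
  intro k
  induction k with
  | zero =>
    refine iter_of_single 0 ?_
    intro β x y _ H
    have := HardyRel.succ β x y (by simpa [Hpow] using H)
    simpa using this
  | succ k ih =>
    refine iter_of_single (k + 1) ?_
    intro β x y hdvd H
    rw [hpow_succ] at H
    have hdvd' : omega0 ^ k ∣ β := dvd_trans (dvd_mul_right _ _) (by rwa [← pow_succ])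
    have h1 := ih (x + 1) β x y hdvd' H
    exact HardyRel.limit β k x y hdvd (by simpa using h1)

/-! ### Arithmetic facts about iterates -/

lemma iter_infl {f : ℕ → ℕ} (hf : ∀ x, x ≤ f x) : ∀ n x, x ≤ f^[n] x := by
  intro n
  induction n with
  | zero => simp
  | succ n ih =>
    intro x
    rw [Function.iterate_succ_apply]
    exact le_trans (hf x) (ih (f x))

lemma iter_le_iter {f : ℕ → ℕ} (hm : Monotone f) (hi : ∀ x, x ≤ f x)
    {m m' x x' : ℕ} (hmm : m ≤ m') (hxx : x ≤ x') : f^[m] x ≤ f^[m'] x' := by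
  calc f^[m] x ≤ f^[m] x' := (hm.iterate m) hxx
    _ ≤ f^[m' - m] (f^[m] x') := iter_infl (fun z => iter_infl hi 1 z |>.trans_eq (by simp)) _ _
    _ = f^[m'] x' := by rw [← Function.iterate_add_apply]; congr 1; omega

lemma hpow_mono_infl {h : ℕ → ℕ} (hm : Monotone h) (hi : ∀ x, x ≤ h x) :
    ∀ k, Monotone (Hpow h k) ∧ ∀ x, x ≤ Hpow h k x := by
  intro k
  induction k with
  | zero => exact ⟨hm, hi⟩
  | succ k ih =>
    constructor
    · intro x x' hxx
      rw [hpow_succ, hpow_succ]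
      exact iter_le_iter ih.1 ih.2 (by omega) hxx
    · intro x
      rw [hpow_succ]
      exact iter_infl ih.2 (x + 1) x

/-- Abbreviation for the Hardy functions of `H(x) = x + 1`. -/
def Hp : ℕ → ℕ → ℕ := Hpow (fun n => n + 1)

lemma hp_mono (k : ℕ) : Monotone (Hp k) :=
  (hpow_mono_infl (fun _ _ l => by omega) (fun n => Nat.le_succ n) k).1

lemma hp_infl (k : ℕ) : ∀ x, x ≤ Hp k x :=
  (hpow_mono_infl (fun _ _ l => by omega) (fun n => Nat.le_succ n) k).2

lemma hp_one (x : ℕ) : Hp 1 x = 2 * x + 1 := by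
  show (fun n => n + 1)^[x + 1] x = 2 * x + 1
  have : ∀ m z : ℕ, (fun n => n + 1)^[m] z = z + m := by
    intro m
    induction m with
    | zero => simp
    | succ m ih => intro z; rw [Function.iterate_succ_apply, ih]; omega
  rw [this]; omega

lemma hp_le_succ (k x : ℕ) : Hp k x ≤ Hp (k + 1) x := by
  show Hp k x ≤ (Hp k)^[x + 1] x
  calc Hp k x = (Hp k)^[1] x := by simp
    _ ≤ (Hp k)^[x + 1] x := iter_le_iter (hp_mono k) (hp_infl k) (by omega) le_rfl

lemma two_mul_le_hp {k : ℕ} (hk : 1 ≤ k) (x : ℕ) : 2 * x ≤ Hp k x := by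
  induction k with
  | zero => omega
  | succ k ih =>
    rcases Nat.eq_or_lt_of_le hk with h1 | h2
    · rw [← h1, hp_one]; omega
    · exact le_trans (ih (by omega)) (hp_le_succ k x)

lemma mul_le_hp_iter {k : ℕ} (hk : 1 ≤ k) (c x : ℕ) : (c + 1) * x ≤ (Hp k)^[c] x := by
  induction c with
  | zero => simp
  | succ c ih =>
    rw [Function.iterate_succ_apply']
    calc (c + 1 + 1) * x ≤ 2 * ((c + 1) * x) := by nlinarith
      _ ≤ 2 * ((Hp k)^[c] x) := by omega
      _ ≤ Hp k ((Hp k)^[c] x) := two_mul_le_hp hk _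

/-! ### The main arithmetic estimate -/

lemma arith {h : ℕ → ℕ} (hm : Monotone h) (hi : ∀ x, x ≤ h x) {b c x₀ : ℕ}
    (hc : 1 ≤ c) (hg : ∀ x, x₀ ≤ x → h x ≤ (Hp b)^[c] x) :
    ∀ a, 1 ≤ a → ∀ x, 2 * c ≤ x → x₀ ≤ x → Hpow h a x ≤ Hp (b + a) ((c + 1) * x) := by
  intro a
  induction a with
  | zero => omega
  | succ a ih =>
    intro _ x h2c hx0
    rcases Nat.eq_zero_or_pos a with rfl | hapos
    · -- base case : a + 1 = 1
      rw [hpow_succ]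
      have key : ∀ n, h^[n] x ≤ ((Hp b)^[c])^[n] x := by
        intro n
        induction n with
        | zero => simp
        | succ n ihn =>
          rw [Function.iterate_succ_apply', Function.iterate_succ_apply']
          calc h (h^[n] x) ≤ (Hp b)^[c] (h^[n] x) :=
                hg _ (le_trans hx0 (iter_infl hi n x))
            _ ≤ (Hp b)^[c] (((Hp b)^[c])^[n] x) := ((hp_mono b).iterate c) ihn
      have e1 : ((Hp b)^[c])^[x + 1] x = (Hp b)^[c * (x + 1)] x := by
        rw [Function.iterate_mul]
      have e2 : Hp (b + 1) ((c + 1) * x) = (Hp b)^[(c + 1) * x + 1] ((c + 1) * x) := rfl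
      calc (Hpow h 0)^[x + 1] x = h^[x + 1] x := rfl
        _ ≤ ((Hp b)^[c])^[x + 1] x := key (x + 1)
        _ = (Hp b)^[c * (x + 1)] x := e1
        _ ≤ (Hp b)^[(c + 1) * x + 1] ((c + 1) * x) := by
            apply iter_le_iter (hp_mono b) (hp_infl b)
            · nlinarith
            · nlinarith
        _ = Hp (b + 1) ((c + 1) * x) := e2.symm
    · -- inductive step : a ≥ 1
      have hba : 1 ≤ b + a := by omega
      set G := Hp (b + a) with hG
      set X := (c + 1) * x with hX
      have hpm := (hpow_mono_infl hm hi a).1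
      have hpi := (hpow_mono_infl hm hi a).2
      have P : ∀ n, (Hpow h a)^[n + 1] x ≤ G^[(c + 1) * n + 1] X := by
        intro n
        induction n with
        | zero => simpa using ih hapos x h2c hx0
        | succ n ihn =>
          have hu : x ≤ (Hpow h a)^[n + 1] x := iter_infl hpi _ _
          have step : Hpow h a ((Hpow h a)^[n + 1] x)
              ≤ G ((c + 1) * ((Hpow h a)^[n + 1] x)) :=
            ih hapos _ (by omega) (by omega)
          have step2 : (c + 1) * ((Hpow h a)^[n + 1] x)
              ≤ G^[c + ((c + 1) * n + 1)] X := by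
            calc (c + 1) * ((Hpow h a)^[n + 1] x)
                ≤ (c + 1) * (G^[(c + 1) * n + 1] X) := Nat.mul_le_mul_left _ ihn
              _ ≤ (Hp (b + a))^[c] (G^[(c + 1) * n + 1] X) := mul_le_hp_iter hba _ _
              _ = G^[c + ((c + 1) * n + 1)] X :=
                  (Function.iterate_add_apply G c ((c + 1) * n + 1) X).symm
          calc (Hpow h a)^[n + 1 + 1] x
              = Hpow h a ((Hpow h a)^[n + 1] x) := Function.iterate_succ_apply' _ _ _
            _ ≤ G ((c + 1) * ((Hpow h a)^[n + 1] x)) := step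
            _ ≤ G (G^[c + ((c + 1) * n + 1)] X) := hp_mono (b + a) step2
            _ = G^[c + ((c + 1) * n + 1) + 1] X := (Function.iterate_succ_apply' _ _ _).symm
            _ = G^[(c + 1) * (n + 1) + 1] X := by congr 1; ring
      calc Hpow h (a + 1) x = (Hpow h a)^[x + 1] x := rfl
        _ ≤ G^[(c + 1) * x + 1] X := P x
        _ = Hp (b + a + 1) X := rfl
        _ = Hp (b + (a + 1)) ((c + 1) * x) := by rw [hX]; ring_nf

/-! ### Main theorem -/

theorem stmt10 (h : ℕ → ℕ) (hmono : Monotone h) (hinfl : ∀ x, x ≤ h x)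
    (a b c x₀ : ℕ) (ha : 1 ≤ a) (hb : 1 ≤ b) (hc : 1 ≤ c)
    (hdom : ∀ x, x₀ ≤ x → ∀ y,
      HardyRel (fun n => n + 1) (omega0 ^ b * (c : Ordinal)) x y → h x ≤ y) :
    ∀ x, max (2 * c) x₀ ≤ x → ∀ y z, HardyRel h (omega0 ^ a) x y →
      HardyRel (fun n => n + 1) (omega0 ^ (b + a)) ((c + 1) * x) z → y ≤ z := by
  intro x hx y z hy hz
  have hg : ∀ w, x₀ ≤ w → h w ≤ (Hp b)^[c] w := by
    intro w hw
    apply hdom w hw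
    have := hardy_iter (fun n => n + 1) b c 0 w ((Hp b)^[c] w) (dvd_zero _)
      (HardyRel.zero _)
    simpa using this
  have hy' : HardyRel h (omega0 ^ a) x (Hpow h a x) := by
    have := hardy_iter h a 1 0 x ((Hpow h a)^[1] x) (dvd_zero _) (HardyRel.zero _)
    simpa using this
  have hz' : HardyRel (fun n => n + 1) (omega0 ^ (b + a)) ((c + 1) * x)
      (Hp (b + a) ((c + 1) * x)) := by
    have := hardy_iter (fun n => n + 1) (b + a) 1 0 ((c + 1) * x)
      ((Hp (b + a))^[1] ((c + 1) * x)) (dvd_zero _) (HardyRel.zero _)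
    simpa [Hp] using this
  have ey : y = Hpow h a x := hardy_det hy rfl hy'
  have ez : z = Hp (b + a) ((c + 1) * x) := hardy_det hz rfl hz'
  rw [ey, ez]
  exact arith hmono hinfl hc hg a ha x (le_trans (le_max_left _ _) hx)
    (le_trans (le_max_right _ _) hx)
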